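/- For every n ≥ 4, every automorphism of the Möbius ladder Mₙ maps each rung to a rung: if σ is an automorphism of Mₙ, then for every vertex i ∈ ZMod (2n) one has σ(i + n) = σ(i) + n. (Equivalently, every automorphism of Mₙ leaves the 2n-gon formed by the edges joining i to i+1 setwise invariant.) -/

import Mathlib

/-- The automorphism group of a simple graph, as the subgroup of the
permutation group of its vertices consisting of adjacency-preserving permutations. -/
def SimpleGraph.autSubgroup {V : Type*} (G : SimpleGraph V) : Subgroup (Equiv.Perm V) where
  carrier := {σ | ∀ a b : V, G.Adj (σ a) (σ b) ↔ G.Adj a b}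
  one_mem' := by intro a b; simp
  mul_mem' := by
    intro σ τ hσ hτ a b
    simpa [Equiv.Perm.mul_apply] using (hσ (τ a) (τ b)).trans (hτ a b)
  inv_mem' := by
    intro σ hσ a b
    simpa using (hσ (σ⁻¹ a) (σ⁻¹ b)).symm

/-- The Möbius ladder with `n` rungs: vertices are `ZMod (2 * n)`, with distinct
vertices `i` and `j` adjacent iff `j - i ∈ {1, -1, n}`. -/
def mobiusLadder (n : ℕ) : SimpleGraph (ZMod (2 * n)) where
  Adj i j := i ≠ j ∧ (j - i = 1 ∨ j - i = -1 ∨ j - i = (n : ZMod (2 * n)))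
  symm := by
    constructor
    intro i j ⟨hne, h⟩
    have hn : -(n : ZMod (2 * n)) = (n : ZMod (2 * n)) := by
      have h2 : ((n : ZMod (2 * n)) + n) = ((2 * n : ℕ) : ZMod (2 * n)) := by
        push_cast; ring
      have h0 : ((n : ZMod (2 * n)) + n) = 0 := by rw [h2, ZMod.natCast_self]
      exact neg_eq_of_add_eq_zero_left h0
    refine ⟨hne.symm, ?_⟩
    have hij : i - j = -(j - i) := by ring
    rcases h with h | h | h
    · right; left; rw [hij, h]
    · left; rw [hij, h]; ring
    · right; right; rw [hij, h, hn]
  loopless := ⟨fun i h => h.1 rfl⟩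

/-- For `n ≥ 4`, every automorphism of the Möbius ladder `Mₙ` takes rungs to
rungs: it commutes with the antipodal map `i ↦ i + n`. -/
lemma dvd_of_zmod_eq (n : ℕ) (x y : ℤ) (h : ((x : ZMod (2*n)) = (y : ZMod (2*n)))) :
    (2*(n:ℤ)) ∣ (x - y) := by
  have h' : x ≡ y [ZMOD (2*n : ℕ)] := (ZMod.intCast_eq_intCast_iff _ _ _).mp h
  have := h'.symm.dvd
  exact_mod_cast this

lemma resolve (n : ℕ) (hn : 4 ≤ n) (x : ℤ) (h : (2*(n:ℤ)) ∣ x)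
    (h2 : -(4*(n:ℤ)) < x) (h3 : x < 4*(n:ℤ)) :
    x = -(2*(n:ℤ)) ∨ x = 0 ∨ x = 2*(n:ℤ) := by
  have hn' : (4:ℤ) ≤ (n:ℤ) := by exact_mod_cast hn
  obtain ⟨k, rfl⟩ := h
  have h1 : k < 2 := by nlinarith
  have h2' : -2 < k := by nlinarith
  have hk : k = -1 ∨ k = 0 ∨ k = 1 := by omega
  rcases hk with rfl|rfl|rfl
  · left; ring
  · right; left; ring
  · right; right; ring

lemma zmod_int_ne_zero (n : ℕ) (hn : 4 ≤ n) (z : ℤ) (h0 : z ≠ 0)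
    (hl : -(2*(n:ℤ)) < z) (hr : z < 2*(n:ℤ)) : ((z : ZMod (2*n)) ≠ 0) := by
  have hn' : (4:ℤ) ≤ (n:ℤ) := by exact_mod_cast hn
  intro h
  haveI : NeZero (2*n) := ⟨by omega⟩
  have hd : ((2*n:ℕ):ℤ) ∣ z := (ZMod.intCast_zmod_eq_zero_iff_dvd z (2*n)).mp h
  have hd' : (2*(n:ℤ)) ∣ z := by exact_mod_cast hd
  have := resolve n hn z hd' (by omega) (by omega)
  omega

lemma adj_step (n : ℕ) (a c : ZMod (2*n)) (h : (mobiusLadder n).Adj a c) :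
    ∃ z : ℤ, (z = 1 ∨ z = -1 ∨ z = (n:ℤ)) ∧ c - a = ((z : ℤ) : ZMod (2*n)) := by
  rcases h.2 with h'|h'|h'
  · exact ⟨1, Or.inl rfl, by rw [h']; norm_num⟩
  · exact ⟨-1, Or.inr (Or.inl rfl), by rw [h']; push_cast; ring⟩
  · exact ⟨(n:ℤ), Or.inr (Or.inr rfl), by rw [h']; push_cast; ring⟩

lemma unique_completion (n : ℕ) (hn : 4 ≤ n) (a b c d : ZMod (2*n)) (w : ℤ)
    (hw : w = 1 ∨ w = -1) (hba : b - a = ((w : ℤ) : ZMod (2*n)))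
    (h1 : (mobiusLadder n).Adj a c) (h2 : (mobiusLadder n).Adj c d)
    (h3 : (mobiusLadder n).Adj d b) (hcb : c ≠ b) (hda : d ≠ a) :
    c = a + (n : ZMod (2*n)) ∧ d = b + (n : ZMod (2*n)) := by
  have hn' : (4:ℤ) ≤ (n:ℤ) := by exact_mod_cast hn
  obtain ⟨z1, hz1, hca⟩ := adj_step n a c h1
  obtain ⟨z2, hz2, hdc⟩ := adj_step n c d h2
  obtain ⟨z3, hz3, hbd⟩ := adj_step n d b h3
  have hsum : (2*(n:ℤ)) ∣ (z1+z2+z3 - w) := by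
    apply dvd_of_zmod_eq n
    push_cast
    rw [← hca, ← hdc, ← hbd, ← hba]
    ring
  have h2n0 : (((2*n:ℕ)) : ZMod (2*n)) = 0 := ZMod.natCast_self _
  have hdav : d - a = ((z1+z2 : ℤ) : ZMod (2*n)) := by
    push_cast; rw [← hca, ← hdc]; ring
  have key : ∀ v : ℤ, z1 + z2 = v → ((v : ℤ) : ZMod (2*n)) = 0 → d = a := by
    intro v hv h0
    have : d - a = 0 := by rw [hdav, hv, h0]
    exact sub_eq_zero.mp this
  have hda0 : z1 + z2 ≠ 0 := fun h => hda (key 0 h (by norm_num))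
  have h2nz : (((2*(n:ℤ)) : ℤ) : ZMod (2*n)) = 0 := by exact_mod_cast h2n0
  have hda2 : z1 + z2 ≠ 2*(n:ℤ) := fun h => hda (key _ h h2nz)
  have hdam : z1 + z2 ≠ -(2*(n:ℤ)) := fun h => hda (key _ h (by rw [Int.cast_neg, h2nz, neg_zero]))
  have hcb1 : z1 ≠ w := by
    intro h
    apply hcb
    have hv : c - b = ((z1 - w : ℤ) : ZMod (2*n)) := by
      push_cast; rw [← hca, ← hba]; ring
    have h0 : c - b = 0 := by rw [hv, h]; simp
    exact sub_eq_zero.mp h0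
  rcases hz1 with rfl|rfl|rfl <;> rcases hz2 with rfl|rfl|rfl <;>
    rcases hz3 with rfl|rfl|rfl <;> rcases hw with rfl|rfl <;>
    first
      | (exfalso
         have hres := resolve n hn _ hsum (by omega) (by omega)
         rcases hres with h|h|h <;> omega)
      | (push_cast at hca hdc hba
         exact ⟨by linear_combination hca, by linear_combination hca + hdc - hba⟩)

theorem mobiusLadder_aut_maps_rungs_to_rungs (n : ℕ) (hn : 4 ≤ n)
    (σ : Equiv.Perm (ZMod (2 * n))) (hσ : σ ∈ (mobiusLadder n).autSubgroup)
    (i : ZMod (2 * n)) :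
    σ (i + (n : ZMod (2 * n))) = σ i + (n : ZMod (2 * n)) := by
  have hn' : (4:ℤ) ≤ (n:ℤ) := by exact_mod_cast hn
  have hne := zmod_int_ne_zero n hn
  have mkadj : ∀ (x y : ZMod (2*n)) (z : ℤ), y - x = ((z : ℤ) : ZMod (2*n)) →
      (z = 1 ∨ z = -1 ∨ z = (n:ℤ)) → (mobiusLadder n).Adj x y := by
    intro x y z hxy hz
    have hz0 : ((z : ℤ) : ZMod (2*n)) ≠ 0 := hne z (by omega) (by omega) (by omega)
    refine ⟨fun h => hz0 ?_, ?_⟩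
    · rw [← hxy, h, sub_self]
    · rcases hz with rfl|rfl|rfl
      · left; rw [hxy]; norm_num
      · right; left; rw [hxy]; push_cast; ring
      · right; right; rw [hxy]; push_cast; ring
  have neq : ∀ (x y : ZMod (2*n)) (z : ℤ), y - x = ((z : ℤ) : ZMod (2*n)) →
      z ≠ 0 → -(2*(n:ℤ)) < z → z < 2*(n:ℤ) → σ x ≠ σ y := by
    intro x y z h hz hl hr hEq
    exact hne z hz hl hr (by rw [← h, σ.injective hEq, sub_self])
  have H : ∀ x y : ZMod (2*n), (mobiusLadder n).Adj x y →
      (mobiusLadder n).Adj (σ x) (σ y) := fun x y h => (hσ x y).mpr h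
  have hArung : (mobiusLadder n).Adj i (i + (n : ZMod (2*n))) :=
    mkadj _ _ (n:ℤ) (by push_cast; ring) (Or.inr (Or.inr rfl))
  have h1 : (mobiusLadder n).Adj i (i+1) := mkadj _ _ 1 (by push_cast; ring) (Or.inl rfl)
  have h2 : (mobiusLadder n).Adj (i+1) (i+1+(n : ZMod (2*n))) :=
    mkadj _ _ (n:ℤ) (by push_cast; ring) (Or.inr (Or.inr rfl))
  have h3 : (mobiusLadder n).Adj (i+1+(n : ZMod (2*n))) (i + (n : ZMod (2*n))) :=
    mkadj _ _ (-1) (by push_cast; ring) (Or.inr (Or.inl rfl))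
  have h1' : (mobiusLadder n).Adj i (i-1) := mkadj _ _ (-1) (by push_cast; ring) (Or.inr (Or.inl rfl))
  have h2' : (mobiusLadder n).Adj (i-1) (i-1+(n : ZMod (2*n))) :=
    mkadj _ _ (n:ℤ) (by push_cast; ring) (Or.inr (Or.inr rfl))
  have h3' : (mobiusLadder n).Adj (i-1+(n : ZMod (2*n))) (i + (n : ZMod (2*n))) :=
    mkadj _ _ 1 (by push_cast; ring) (Or.inl rfl)
  have hcb : σ (i+1) ≠ σ (i + (n : ZMod (2*n))) :=
    neq _ _ ((n:ℤ) - 1) (by push_cast; ring) (by omega) (by omega) (by omega)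
  have hda : σ (i+1+(n : ZMod (2*n))) ≠ σ i :=
    neq _ _ (-((n:ℤ) + 1)) (by push_cast; ring) (by omega) (by omega) (by omega)
  have hcb' : σ (i-1) ≠ σ (i + (n : ZMod (2*n))) :=
    neq _ _ ((n:ℤ) + 1) (by push_cast; ring) (by omega) (by omega) (by omega)
  have hda' : σ (i-1+(n : ZMod (2*n))) ≠ σ i :=
    neq _ _ (1 - (n:ℤ)) (by push_cast; ring) (by omega) (by omega) (by omega)
  have hcc' : σ (i+1) ≠ σ (i-1) :=
    neq _ _ (-2) (by push_cast; ring) (by omega) (by omega) (by omega)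
  have hAB := H _ _ hArung
  rcases hAB.2 with h|h|h
  · have u1 := unique_completion n hn (σ i) (σ (i + (n : ZMod (2*n)))) (σ (i+1))
      (σ (i+1+(n : ZMod (2*n)))) 1 (Or.inl rfl) (by rw [h]; norm_num)
      (H _ _ h1) (H _ _ h2) (H _ _ h3) hcb hda
    have u2 := unique_completion n hn (σ i) (σ (i + (n : ZMod (2*n)))) (σ (i-1))
      (σ (i-1+(n : ZMod (2*n)))) 1 (Or.inl rfl) (by rw [h]; norm_num)
      (H _ _ h1') (H _ _ h2') (H _ _ h3') hcb' hda'
    exact absurd (u1.1.trans u2.1.symm) hcc'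
  · have u1 := unique_completion n hn (σ i) (σ (i + (n : ZMod (2*n)))) (σ (i+1))
      (σ (i+1+(n : ZMod (2*n)))) (-1) (Or.inr rfl) (by rw [h]; push_cast; ring)
      (H _ _ h1) (H _ _ h2) (H _ _ h3) hcb hda
    have u2 := unique_completion n hn (σ i) (σ (i + (n : ZMod (2*n)))) (σ (i-1))
      (σ (i-1+(n : ZMod (2*n)))) (-1) (Or.inr rfl) (by rw [h]; push_cast; ring)
      (H _ _ h1') (H _ _ h2') (H _ _ h3') hcb' hda'
    exact absurd (u1.1.trans u2.1.symm) hcc'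
  · linear_combination h
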